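/- Let G = (V,E) be a finite simple graph with |V| = n, let 1/3 ≤ α ≤ 1 and 0 < ε < 1, and let k be an integer with k + ⌈4k/ε²⌉ ≤ n. Let V' ⊆ V be a set of k + ⌈4k/ε²⌉ vertices of largest degrees (d(u) ≥ d(w) for all u ∈ V', w ∈ V∖V'). Then there exists S ⊆ V' with |S| = k such that cov_α(S) ≥ (1−ε)·cov_α(O) for every O ⊆ V with |O| = k. -/

import Mathlib

open Finset

/-- Number of edges of `G` with both endpoints in `X`. -/
noncomputable def mIn {V : Type*} (G : SimpleGraph V) (X : Finset V) : ℕ :=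
  {e ∈ G.edgeSet | ∀ v ∈ e, v ∈ X}.ncard

/-- Number of edges of `G` with one endpoint in `X` and the other in `Y`. -/
noncomputable def mBtw {V : Type*} (G : SimpleGraph V) (X Y : Finset V) : ℕ :=
  {e ∈ G.edgeSet | ∃ u ∈ X, ∃ w ∈ Y, e = s(u, w)}.ncard

/-- `cov_α(S) = (1-α)·m(S) + α·m(S, V∖S)`. -/
noncomputable def cov {V : Type*} [Fintype V] [DecidableEq V] (G : SimpleGraph V) (α : ℝ)
    (S : Finset V) : ℝ :=
  (1 - α) * mIn G S + α * mBtw G S Sᶜ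

set_option linter.unusedSectionVars false

section Count
variable {α : Type*} [DecidableEq α]

lemma choose_id1 {w r : ℕ} (hw : 1 ≤ w) (hr : 1 ≤ r) :
    w * (w - 1).choose (r - 1) = r * w.choose r := by
  obtain ⟨n, rfl⟩ : ∃ n, w = n + 1 := ⟨w - 1, by omega⟩
  obtain ⟨m, rfl⟩ : ∃ m, r = m + 1 := ⟨r - 1, by omega⟩
  simp only [Nat.add_sub_cancel]
  have h := Nat.add_one_mul_choose_eq n m
  linarith [h]

lemma cnt1_card (W : Finset α) (r' : ℕ) {y : α} (hy : y ∈ W) :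
    ((W.powersetCard (r' + 1)).filter fun Y => y ∈ Y).card
      = ((W.erase y).powersetCard r').card := by
  refine Finset.card_bij' (fun Y _ => Y.erase y) (fun Z _ => insert y Z) ?_ ?_ ?_ ?_
  · intro Y hY
    simp only [Finset.mem_filter, Finset.mem_powersetCard] at hY
    obtain ⟨⟨hsub, hcard⟩, hmem⟩ := hY
    rw [Finset.mem_powersetCard]
    exact ⟨Finset.erase_subset_erase y hsub, by rw [Finset.card_erase_of_mem hmem, hcard]; omega⟩
  · intro Z hZ
    rw [Finset.mem_powersetCard] at hZ
    obtain ⟨hsub, hcard⟩ := hZ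
    have hyZ : y ∉ Z := fun h => (Finset.mem_erase.1 (hsub h)).1 rfl
    simp only [Finset.mem_filter, Finset.mem_powersetCard]
    refine ⟨⟨?_, by rw [Finset.card_insert_of_notMem hyZ, hcard]⟩, Finset.mem_insert_self y Z⟩
    exact Finset.insert_subset hy (hsub.trans (Finset.erase_subset y W))
  · intro Y hY
    simp only [Finset.mem_filter] at hY
    exact Finset.insert_erase hY.2
  · intro Z hZ
    rw [Finset.mem_powersetCard] at hZ
    have hyZ : y ∉ Z := fun h => (Finset.mem_erase.1 (hZ.1 h)).1 rfl
    exact Finset.erase_insert hyZ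

lemma cnt1 (W : Finset α) (r : ℕ) {y : α} (hy : y ∈ W) :
    ((W.powersetCard r).filter fun Y => y ∈ Y).card * W.card
      = r * W.card.choose r := by
  rcases r with _ | r'
  · have he : ((W.powersetCard 0).filter fun Y => y ∈ Y) = ∅ := by
      rw [Finset.powersetCard_zero, Finset.filter_eq_empty_iff]
      intro Y hY
      rw [Finset.mem_singleton] at hY
      subst hY
      simp
    rw [he]
    simp
  · rw [cnt1_card W r' hy, Finset.card_powersetCard, Finset.card_erase_of_mem hy]
    have hw : 1 ≤ W.card := Finset.card_pos.2 ⟨y, hy⟩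
    rw [mul_comm]
    exact choose_id1 hw (Nat.succ_le_succ (Nat.zero_le r'))

lemma cnt2 (W : Finset α) (r : ℕ) {u v : α} (hu : u ∈ W) (hv : v ∈ W) (huv : u ≠ v) :
    ((W.powersetCard r).filter fun Y => u ∈ Y ∧ v ∈ Y).card * (W.card * (W.card - 1))
      = r * (r - 1) * W.card.choose r := by
  rcases r with _ | r'
  · have he : ((W.powersetCard 0).filter fun Y => u ∈ Y ∧ v ∈ Y) = ∅ := by
      rw [Finset.powersetCard_zero, Finset.filter_eq_empty_iff]
      intro Y hY
      rw [Finset.mem_singleton] at hY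
      subst hY
      simp
    rw [he]
    simp
  rcases r' with _ | r''
  · have : ((W.powersetCard 1).filter fun Y => u ∈ Y ∧ v ∈ Y) = ∅ := by
      rw [Finset.filter_eq_empty_iff]
      intro Y hY
      rw [Finset.mem_powersetCard] at hY
      rintro ⟨h1, h2⟩
      exact huv (Finset.card_le_one.1 hY.2.le u h1 v h2)
    simp [this]
  · -- r = r'' + 2
    have step1 : ((W.powersetCard (r'' + 2)).filter fun Y => u ∈ Y ∧ v ∈ Y).card
        = (((W.erase u).powersetCard (r'' + 1)).filter fun Z => v ∈ Z).card := by
      refine Finset.card_bij' (fun Y _ => Y.erase u) (fun Z _ => insert u Z) ?_ ?_ ?_ ?_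
      · intro Y hY
        simp only [Finset.mem_filter, Finset.mem_powersetCard] at hY
        obtain ⟨⟨hsub, hcard⟩, hmu, hmv⟩ := hY
        simp only [Finset.mem_filter, Finset.mem_powersetCard]
        exact ⟨⟨Finset.erase_subset_erase u hsub,
          by rw [Finset.card_erase_of_mem hmu, hcard]; omega⟩, Finset.mem_erase.2 ⟨huv.symm, hmv⟩⟩
      · intro Z hZ
        simp only [Finset.mem_filter, Finset.mem_powersetCard] at hZ
        obtain ⟨⟨hsub, hcard⟩, hmv⟩ := hZ
        have huZ : u ∉ Z := fun h => (Finset.mem_erase.1 (hsub h)).1 rfl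
        simp only [Finset.mem_filter, Finset.mem_powersetCard]
        refine ⟨⟨Finset.insert_subset hu (hsub.trans (Finset.erase_subset u W)),
          by rw [Finset.card_insert_of_notMem huZ, hcard]⟩,
          Finset.mem_insert_self u Z, Finset.mem_insert_of_mem hmv⟩
      · intro Y hY
        simp only [Finset.mem_filter] at hY
        exact Finset.insert_erase hY.2.1
      · intro Z hZ
        simp only [Finset.mem_filter, Finset.mem_powersetCard] at hZ
        have huZ : u ∉ Z := fun h => (Finset.mem_erase.1 (hZ.1.1 h)).1 rfl
        exact Finset.erase_insert huZ
    have hvW : v ∈ W.erase u := Finset.mem_erase.2 ⟨huv.symm, hv⟩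
    have h2 := cnt1 (W.erase u) (r'' + 1) hvW
    have hw : 1 ≤ W.card := Finset.card_pos.2 ⟨u, hu⟩
    have key := choose_id1 hw (show 1 ≤ r'' + 2 by omega)
    simp only [show r'' + 2 - 1 = r'' + 1 from rfl] at key
    -- combine: card * (W.card - 1) = (r''+1) * (W.card-1).choose (r''+1)
    -- then multiply by W.card and use key
    rw [step1]
    have expand : (((W.erase u).powersetCard (r'' + 1)).filter fun Z => v ∈ Z).card
        * (W.card - 1) = (r'' + 1) * (W.card - 1).choose (r'' + 1) := by
      rw [Finset.card_erase_of_mem hu] at h2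
      exact h2
    simp only [show r'' + 2 - 1 = r'' + 1 from rfl]
    calc (((W.erase u).powersetCard (r'' + 1)).filter fun Z => v ∈ Z).card
          * (W.card * (W.card - 1))
        = ((((W.erase u).powersetCard (r'' + 1)).filter fun Z => v ∈ Z).card
          * (W.card - 1)) * W.card := by ring
      _ = ((r'' + 1) * (W.card - 1).choose (r'' + 1)) * W.card := by rw [expand]
      _ = (r'' + 1) * (W.card * (W.card - 1).choose (r'' + 1)) := by ring
      _ = (r'' + 1) * ((r'' + 2) * W.card.choose (r'' + 2)) := by rw [key]
      _ = (r'' + 2) * (r'' + 1) * W.card.choose (r'' + 2) := by ring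
lemma sum_powersetCard_sum (W : Finset α) (r : ℕ) (f : α → ℕ) :
    (∑ Y ∈ W.powersetCard r, ∑ y ∈ Y, f y) * W.card
      = r * W.card.choose r * (∑ y ∈ W, f y) := by
  have h1 : ∀ Y ∈ W.powersetCard r, ∑ y ∈ Y, f y = ∑ y ∈ W, if y ∈ Y then f y else 0 := by
    intro Y hY
    rw [Finset.sum_ite_mem, Finset.inter_eq_right.2 (Finset.mem_powersetCard.1 hY).1]
  rw [Finset.sum_congr rfl h1, Finset.sum_comm]
  have h2 : ∀ y ∈ W, (∑ Y ∈ W.powersetCard r, if y ∈ Y then f y else 0)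
      = ((W.powersetCard r).filter fun Y => y ∈ Y).card * f y := by
    intro y _
    rw [Finset.sum_ite, Finset.sum_const, Finset.sum_const_zero, add_zero, smul_eq_mul]
  rw [Finset.sum_congr rfl h2, Finset.sum_mul]
  rw [Finset.mul_sum]
  refine Finset.sum_congr rfl fun y hy => ?_
  calc ((W.powersetCard r).filter fun Y => y ∈ Y).card * f y * W.card
      = ((W.powersetCard r).filter fun Y => y ∈ Y).card * W.card * f y := by ring
    _ = r * W.card.choose r * f y := by rw [cnt1 W r hy]
end Count

section GraphAux
variable {V : Type*} [Fintype V] [DecidableEq V] (G : SimpleGraph V) [DecidableRel G.Adj]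

/-- ordered adjacent pairs count -/
def dpc (X Y : Finset V) : ℕ := ∑ u ∈ X, ∑ v ∈ Y, if G.Adj u v then 1 else 0

lemma dpc_comm (X Y : Finset V) : dpc G X Y = dpc G Y X := by
  unfold dpc
  rw [Finset.sum_comm]
  refine Finset.sum_congr rfl fun u _ => Finset.sum_congr rfl fun v _ => ?_
  simp [SimpleGraph.adj_comm]

lemma dpc_mono {X X' Y Y' : Finset V} (hX : X ⊆ X') (hY : Y ⊆ Y') :
    dpc G X Y ≤ dpc G X' Y' := by
  unfold dpc
  refine le_trans (Finset.sum_le_sum fun u _ => ?_) (Finset.sum_le_sum_of_subset hX)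
  exact Finset.sum_le_sum_of_subset hY

lemma dpc_union_left {X Y Z : Finset V} (h : Disjoint X Y) :
    dpc G (X ∪ Y) Z = dpc G X Z + dpc G Y Z := Finset.sum_union h

lemma dpc_union_right {X Y Z : Finset V} (h : Disjoint Y Z) :
    dpc G X (Y ∪ Z) = dpc G X Y + dpc G X Z := by
  unfold dpc
  rw [← Finset.sum_add_distrib]
  exact Finset.sum_congr rfl fun u _ => Finset.sum_union h

lemma dpc_univ (X : Finset V) : dpc G X univ = ∑ v ∈ X, G.degree v := by
  unfold dpc
  refine Finset.sum_congr rfl fun u _ => ?_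
  rw [← Finset.card_filter]
  rw [SimpleGraph.degree, SimpleGraph.neighborFinset_eq_filter]

lemma dpc_compl_split (X : Finset V) :
    dpc G X univ = dpc G X X + dpc G X Xᶜ := by
  rw [← dpc_union_right G (disjoint_compl_right), Finset.union_compl]

lemma sum_sum_ite_eq_dpc (X Y : Finset V) :
    ∑ u : V, ∑ v : V, (if G.Adj u v ∧ u ∈ X ∧ v ∈ Y then 1 else 0) = dpc G X Y := by
  unfold dpc
  have h1 : ∀ u v : V, (if G.Adj u v ∧ u ∈ X ∧ v ∈ Y then (1:ℕ) else 0) =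
      if u ∈ X then (if v ∈ Y then (if G.Adj u v then 1 else 0) else 0) else 0 := by
    intro u v
    by_cases h1 : u ∈ X <;> by_cases h2 : v ∈ Y <;> by_cases h3 : G.Adj u v <;>
      simp [h1, h2, h3]
  simp_rw [h1]
  have h2 : ∀ u : V, (∑ v : V, if u ∈ X then (if v ∈ Y then (if G.Adj u v then (1:ℕ) else 0) else 0) else 0) =
      if u ∈ X then (∑ v ∈ Y, if G.Adj u v then 1 else 0) else 0 := by
    intro u
    by_cases hu : u ∈ X
    · simp only [hu, if_true]
      rw [Finset.sum_ite_mem, Finset.univ_inter]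
    · simp [hu]
  rw [Finset.sum_congr rfl fun u _ => h2 u, Finset.sum_ite_mem, Finset.univ_inter]

lemma two_mul_mIn (X : Finset V) : 2 * mIn G X = dpc G X X := by
  classical
  let G' : SimpleGraph V :=
    { Adj := fun u v => G.Adj u v ∧ u ∈ X ∧ v ∈ X
      symm := ⟨fun u v h => ⟨h.1.symm, h.2.2, h.2.1⟩⟩
      loopless := ⟨fun v h => G.loopless.irrefl v h.1⟩ }
  have hdec : DecidableRel G'.Adj := fun u v => instDecidableAnd
  have hset : {e ∈ G.edgeSet | ∀ v ∈ e, v ∈ X} = G'.edgeSet := by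
    ext e
    induction e with
    | _ u v =>
      simp only [Set.mem_setOf_eq, SimpleGraph.mem_edgeSet, Sym2.mem_iff]
      constructor
      · rintro ⟨ha, h⟩; exact ⟨ha, h u (Or.inl rfl), h v (Or.inr rfl)⟩
      · rintro ⟨ha, hu, hv⟩; exact ⟨ha, by rintro w (rfl | rfl) <;> assumption⟩
  have hcard : mIn G X = G'.edgeFinset.card := by
    rw [mIn, hset, ← SimpleGraph.coe_edgeFinset, Set.ncard_coe_finset]
  rw [hcard, ← SimpleGraph.sum_degrees_eq_twice_card_edges]
  have hdeg : ∀ u : V, G'.degree u = ∑ v : V, if G.Adj u v ∧ u ∈ X ∧ v ∈ X then 1 else 0 := by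
    intro u
    rw [SimpleGraph.degree, SimpleGraph.neighborFinset_eq_filter, Finset.card_filter]
  rw [Finset.sum_congr rfl fun u _ => hdeg u]
  convert sum_sum_ite_eq_dpc G X X using 4

lemma mBtw_eq_dpc {X Y : Finset V} (hXY : Disjoint X Y) : mBtw G X Y = dpc G X Y := by
  classical
  let G' : SimpleGraph V :=
    { Adj := fun u v => G.Adj u v ∧ ((u ∈ X ∧ v ∈ Y) ∨ (u ∈ Y ∧ v ∈ X))
      symm := ⟨fun u v h => ⟨h.1.symm, h.2.symm.imp And.symm And.symm⟩⟩
      loopless := ⟨fun v h => G.loopless.irrefl v h.1⟩ }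
  have hdec : DecidableRel G'.Adj := fun u v => instDecidableAnd
  have hset : {e ∈ G.edgeSet | ∃ u ∈ X, ∃ w ∈ Y, e = s(u, w)} = G'.edgeSet := by
    ext e
    induction e with
    | _ a b =>
      simp only [Set.mem_setOf_eq, SimpleGraph.mem_edgeSet]
      constructor
      · rintro ⟨ha, u, hu, w, hw, he⟩
        rw [Sym2.eq_iff] at he
        rcases he with ⟨rfl, rfl⟩ | ⟨rfl, rfl⟩
        · exact ⟨ha, Or.inl ⟨hu, hw⟩⟩
        · exact ⟨ha, Or.inr ⟨hw, hu⟩⟩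
      · rintro ⟨ha, ⟨hu, hv⟩ | ⟨hu, hv⟩⟩
        · exact ⟨ha, a, hu, b, hv, rfl⟩
        · exact ⟨ha, b, hv, a, hu, Sym2.eq_swap⟩
  have hcard : mBtw G X Y = G'.edgeFinset.card := by
    rw [mBtw, hset, ← SimpleGraph.coe_edgeFinset, Set.ncard_coe_finset]
  have key : 2 * mBtw G X Y = dpc G X Y + dpc G Y X := by
    rw [hcard, ← SimpleGraph.sum_degrees_eq_twice_card_edges]
    have hdeg : ∀ u : V, G'.degree u =
        ∑ v : V, if G.Adj u v ∧ ((u ∈ X ∧ v ∈ Y) ∨ (u ∈ Y ∧ v ∈ X)) then 1 else 0 := by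
      intro u
      rw [SimpleGraph.degree, SimpleGraph.neighborFinset_eq_filter, Finset.card_filter]
    rw [Finset.sum_congr rfl fun u _ => hdeg u]
    have split : ∀ u v : V, (if G.Adj u v ∧ ((u ∈ X ∧ v ∈ Y) ∨ (u ∈ Y ∧ v ∈ X)) then (1:ℕ) else 0)
        = (if G.Adj u v ∧ u ∈ X ∧ v ∈ Y then 1 else 0)
          + (if G.Adj u v ∧ u ∈ Y ∧ v ∈ X then 1 else 0) := by
      intro u v
      have hnb : ¬((u ∈ X ∧ v ∈ Y) ∧ (u ∈ Y ∧ v ∈ X)) := by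
        rintro ⟨⟨h1, _⟩, ⟨h2, _⟩⟩
        exact (Finset.disjoint_left.1 hXY h1) h2
      by_cases ha : G.Adj u v <;> by_cases h1 : u ∈ X ∧ v ∈ Y <;> by_cases h2 : u ∈ Y ∧ v ∈ X <;>
        simp [ha, h1, h2] <;> tauto
    calc (∑ u : V, ∑ v : V, if G.Adj u v ∧ ((u ∈ X ∧ v ∈ Y) ∨ (u ∈ Y ∧ v ∈ X)) then (1:ℕ) else 0)
        = (∑ u : V, ∑ v : V, ((if G.Adj u v ∧ u ∈ X ∧ v ∈ Y then (1:ℕ) else 0)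
          + (if G.Adj u v ∧ u ∈ Y ∧ v ∈ X then 1 else 0))) := by
          exact Finset.sum_congr rfl fun u _ => Finset.sum_congr rfl fun v _ => split u v
      _ = (∑ u : V, ∑ v : V, if G.Adj u v ∧ u ∈ X ∧ v ∈ Y then (1:ℕ) else 0)
          + (∑ u : V, ∑ v : V, if G.Adj u v ∧ u ∈ Y ∧ v ∈ X then (1:ℕ) else 0) := by
          rw [← Finset.sum_add_distrib]
          exact Finset.sum_congr rfl fun u _ => by rw [← Finset.sum_add_distrib]
      _ = dpc G X Y + dpc G Y X := by
          have e1 := sum_sum_ite_eq_dpc G X Y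
          have e2 := sum_sum_ite_eq_dpc G Y X
          rw [← e1, ← e2]
  rw [dpc_comm G Y X] at key
  omega

lemma dpc_right_sum (X Y : Finset V) : dpc G X Y = ∑ y ∈ Y, dpc G X {y} := by
  unfold dpc
  rw [Finset.sum_comm]
  exact Finset.sum_congr rfl fun y _ => by rw [Finset.sum_congr rfl
    fun u _ => Finset.sum_singleton (fun v => if G.Adj u v then 1 else 0) y]

lemma dpc_left_sum (X Y : Finset V) : dpc G X Y = ∑ u ∈ X, dpc G {u} Y := by
  unfold dpc
  exact Finset.sum_congr rfl fun u _ => by rw [Finset.sum_singleton]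

lemma sum_powersetCard_dpc_right (W X : Finset V) (r : ℕ) :
    (∑ Y ∈ W.powersetCard r, dpc G X Y) * W.card
      = r * W.card.choose r * dpc G X W := by
  have h := sum_powersetCard_sum W r (fun y => dpc G X {y})
  rw [← dpc_right_sum] at h
  rw [Finset.sum_congr rfl fun Y _ => dpc_right_sum G X Y, h]

lemma sum_powersetCard_dpc_left (W Z : Finset V) (r : ℕ) :
    (∑ Y ∈ W.powersetCard r, dpc G Y Z) * W.card
      = r * W.card.choose r * dpc G W Z := by
  have h := sum_powersetCard_sum W r (fun u => dpc G {u} Z)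
  rw [← dpc_left_sum] at h
  rw [Finset.sum_congr rfl fun Y _ => dpc_left_sum G Y Z, h]

lemma sum_powersetCard_dpc_diag (W : Finset V) (r : ℕ) :
    (∑ Y ∈ W.powersetCard r, dpc G Y Y) * (W.card * (W.card - 1))
      = r * (r - 1) * W.card.choose r * dpc G W W := by
  classical
  have h1 : ∀ Y ∈ W.powersetCard r, dpc G Y Y
      = ∑ u ∈ W, ∑ v ∈ W, if u ∈ Y ∧ v ∈ Y ∧ G.Adj u v then 1 else 0 := by
    intro Y hY
    have hsub := (Finset.mem_powersetCard.1 hY).1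
    have e1 : ∀ u v : V, (if u ∈ Y ∧ v ∈ Y ∧ G.Adj u v then (1:ℕ) else 0)
        = if u ∈ Y then (if v ∈ Y then (if G.Adj u v then 1 else 0) else 0) else 0 := by
      intro u v
      by_cases h1 : u ∈ Y <;> by_cases h2 : v ∈ Y <;> by_cases h3 : G.Adj u v <;>
        simp [h1, h2, h3]
    simp_rw [e1]
    have h2 : ∀ u ∈ W, (∑ v ∈ W, if u ∈ Y then (if v ∈ Y then
        (if G.Adj u v then (1:ℕ) else 0) else 0) else 0)
        = if u ∈ Y then (∑ v ∈ Y, if G.Adj u v then (1:ℕ) else 0) else 0 := by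
      intro u _
      by_cases hu : u ∈ Y
      · simp only [hu, if_true]
        rw [Finset.sum_ite_mem, Finset.inter_eq_right.2 hsub]
      · simp [hu]
    rw [Finset.sum_congr rfl h2, Finset.sum_ite_mem, Finset.inter_eq_right.2 hsub]
    rfl
  rw [Finset.sum_congr rfl h1, Finset.sum_comm]
  have h3 : ∀ u ∈ W, (∑ Y ∈ W.powersetCard r, ∑ v ∈ W, if u ∈ Y ∧ v ∈ Y ∧ G.Adj u v then (1:ℕ) else 0)
      = ∑ v ∈ W, ∑ Y ∈ W.powersetCard r, if u ∈ Y ∧ v ∈ Y ∧ G.Adj u v then (1:ℕ) else 0 :=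
    fun u _ => Finset.sum_comm
  rw [Finset.sum_congr rfl h3]
  have h4 : ∀ u ∈ W, ∀ v ∈ W, (∑ Y ∈ W.powersetCard r, if u ∈ Y ∧ v ∈ Y ∧ G.Adj u v then (1:ℕ) else 0)
      = if G.Adj u v then ((W.powersetCard r).filter fun Y => u ∈ Y ∧ v ∈ Y).card else 0 := by
    intro u _ v _
    by_cases ha : G.Adj u v
    · simp only [ha, and_true, if_true]
      rw [Finset.sum_boole]
      simp
    · simp [ha]
  rw [Finset.sum_congr rfl fun u hu => Finset.sum_congr rfl fun v hv => h4 u hu v hv]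
  rw [Finset.sum_mul]
  have h5 : ∀ u ∈ W, ((∑ v ∈ W, if G.Adj u v then
      ((W.powersetCard r).filter fun Y => u ∈ Y ∧ v ∈ Y).card else 0) * (W.card * (W.card - 1)))
      = ∑ v ∈ W, if G.Adj u v then r * (r-1) * W.card.choose r else 0 := by
    intro u hu
    rw [Finset.sum_mul]
    refine Finset.sum_congr rfl fun v hv => ?_
    by_cases ha : G.Adj u v
    · simp only [ha, if_true]
      exact cnt2 W r hu hv (G.ne_of_adj ha)
    · simp [ha]
  rw [Finset.sum_congr rfl h5]
  unfold dpc
  rw [Finset.mul_sum]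
  refine Finset.sum_congr rfl fun u _ => ?_
  rw [Finset.mul_sum]
  refine Finset.sum_congr rfl fun v _ => ?_
  by_cases ha : G.Adj u v <;> simp [ha]
lemma exists_small_dpc (W X : Finset V) {r : ℕ} (hr : r ≤ W.card) :
    ∃ Z ∈ W.powersetCard r, dpc G X Z * W.card ≤ r * dpc G X W := by
  have hne : (W.powersetCard r).Nonempty := Finset.powersetCard_nonempty.2 hr
  obtain ⟨Z, hZmem, hZmin⟩ := Finset.exists_min_image _ (fun Z => dpc G X Z) hne
  refine ⟨Z, hZmem, ?_⟩
  have hC : (W.powersetCard r).card = W.card.choose r := Finset.card_powersetCard r W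
  have hCpos : 0 < (W.powersetCard r).card := Finset.card_pos.2 hne
  have hsum : (W.powersetCard r).card * dpc G X Z ≤ ∑ Y ∈ W.powersetCard r, dpc G X Y := by
    simpa using Finset.card_nsmul_le_sum _ _ _ (fun Y hY => hZmin Y hY)
  have key : (W.powersetCard r).card * (dpc G X Z * W.card)
      ≤ (W.powersetCard r).card * (r * dpc G X W) := by
    calc (W.powersetCard r).card * (dpc G X Z * W.card)
        = ((W.powersetCard r).card * dpc G X Z) * W.card := by ring
      _ ≤ (∑ Y ∈ W.powersetCard r, dpc G X Y) * W.card := Nat.mul_le_mul_right _ hsum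
      _ = r * W.card.choose r * dpc G X W := sum_powersetCard_dpc_right G W X r
      _ = (W.powersetCard r).card * (r * dpc G X W) := by rw [hC]; ring
  exact Nat.le_of_mul_le_mul_left key hCpos

lemma exists_low_interference (W X : Finset V) {r : ℕ} (hr : r ≤ W.card) :
    ∃ Y ∈ W.powersetCard r, (2 * dpc G X Y + dpc G Y Y) * (W.card * (W.card - 1))
      ≤ 2 * r * (W.card - 1) * dpc G X W + r * (r - 1) * dpc G W W := by
  have hne : (W.powersetCard r).Nonempty := Finset.powersetCard_nonempty.2 hr
  obtain ⟨Y, hYmem, hYmin⟩ :=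
    Finset.exists_min_image _ (fun Y => 2 * dpc G X Y + dpc G Y Y) hne
  refine ⟨Y, hYmem, ?_⟩
  have hC : (W.powersetCard r).card = W.card.choose r := Finset.card_powersetCard r W
  have hCpos : 0 < (W.powersetCard r).card := Finset.card_pos.2 hne
  have hsum : (W.powersetCard r).card * (2 * dpc G X Y + dpc G Y Y)
      ≤ ∑ Z ∈ W.powersetCard r, (2 * dpc G X Z + dpc G Z Z) := by
    simpa using Finset.card_nsmul_le_sum _ _ _ (fun Z hZ => hYmin Z hZ)
  have hexp : (∑ Z ∈ W.powersetCard r, (2 * dpc G X Z + dpc G Z Z)) * (W.card * (W.card - 1))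
      = (W.powersetCard r).card
        * (2 * r * (W.card - 1) * dpc G X W + r * (r - 1) * dpc G W W) := by
    rw [Finset.sum_add_distrib, add_mul]
    have e1 := sum_powersetCard_dpc_right G W X r
    have e2 := sum_powersetCard_dpc_diag G W r
    have h1 : (∑ Z ∈ W.powersetCard r, 2 * dpc G X Z) * (W.card * (W.card - 1))
        = (W.powersetCard r).card * (2 * r * (W.card - 1) * dpc G X W) := by
      rw [← Finset.mul_sum]
      calc 2 * (∑ Z ∈ W.powersetCard r, dpc G X Z) * (W.card * (W.card - 1))
          = 2 * (W.card - 1) * ((∑ Z ∈ W.powersetCard r, dpc G X Z) * W.card) := by ring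
        _ = 2 * (W.card - 1) * (r * W.card.choose r * dpc G X W) := by rw [e1]
        _ = (W.powersetCard r).card * (2 * r * (W.card - 1) * dpc G X W) := by rw [hC]; ring
    have h2 : (∑ Z ∈ W.powersetCard r, dpc G Z Z) * (W.card * (W.card - 1))
        = (W.powersetCard r).card * (r * (r - 1) * dpc G W W) := by
      rw [e2, hC]; ring
    rw [h1, h2]
    exact (Nat.mul_add _ _ _).symm
  have key : (W.powersetCard r).card
        * ((2 * dpc G X Y + dpc G Y Y) * (W.card * (W.card - 1)))
      ≤ (W.powersetCard r).card
        * (2 * r * (W.card - 1) * dpc G X W + r * (r - 1) * dpc G W W) := by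
    calc (W.powersetCard r).card * ((2 * dpc G X Y + dpc G Y Y) * (W.card * (W.card - 1)))
        = ((W.powersetCard r).card * (2 * dpc G X Y + dpc G Y Y)) * (W.card * (W.card - 1)) := by
          ring
      _ ≤ (∑ Z ∈ W.powersetCard r, (2 * dpc G X Z + dpc G Z Z)) * (W.card * (W.card - 1)) :=
          Nat.mul_le_mul_right _ hsum
      _ = _ := hexp
  exact Nat.le_of_mul_le_mul_left key hCpos

lemma exists_big_cut (W : Finset V) {k : ℕ} (hk : k ≤ W.card) :
    ∃ T ∈ W.powersetCard k, k * (W.card - k) * dpc G W W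
      ≤ dpc G T (W \ T) * (W.card * (W.card - 1)) := by
  have hne : (W.powersetCard k).Nonempty := Finset.powersetCard_nonempty.2 hk
  rcases Nat.eq_zero_or_pos k with hk0 | hkpos
  · obtain ⟨T, hT⟩ := hne
    exact ⟨T, hT, by simp [hk0]⟩
  obtain ⟨T, hTmem, hTmax⟩ := Finset.exists_max_image _ (fun T => dpc G T (W \ T)) hne
  refine ⟨T, hTmem, ?_⟩
  have hC : (W.powersetCard k).card = W.card.choose k := Finset.card_powersetCard k W
  have hCpos : 0 < (W.powersetCard k).card := Finset.card_pos.2 hne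
  -- partition identity for every T' in the powerset
  have hpart : ∀ T' ∈ W.powersetCard k, dpc G T' (W \ T') + dpc G T' T' = dpc G T' W := by
    intro T' hT'
    have hsub := (Finset.mem_powersetCard.1 hT').1
    rw [← dpc_union_right G (Finset.sdiff_disjoint : Disjoint (W \ T') T'),
      Finset.sdiff_union_of_subset hsub]
  have hsum_eq : (∑ T' ∈ W.powersetCard k, dpc G T' (W \ T'))
        + (∑ T' ∈ W.powersetCard k, dpc G T' T')
      = ∑ T' ∈ W.powersetCard k, dpc G T' W := by
    rw [← Finset.sum_add_distrib]
    exact Finset.sum_congr rfl hpart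
  have e2 := sum_powersetCard_dpc_diag G W k
  have e3 := sum_powersetCard_dpc_left G W W k
  -- S1 * (w * (w-1)) = k * (w-k) * choose * dpc W W
  have hS1 : (∑ T' ∈ W.powersetCard k, dpc G T' (W \ T')) * (W.card * (W.card - 1))
      = k * (W.card - k) * (W.card.choose k * dpc G W W) := by
    have hsplit : W.card - 1 = (W.card - k) + (k - 1) := by omega
    have hA : (∑ T' ∈ W.powersetCard k, dpc G T' W) * (W.card * (W.card - 1))
        = k * (W.card - 1) * (W.card.choose k * dpc G W W) := by
      calc (∑ T' ∈ W.powersetCard k, dpc G T' W) * (W.card * (W.card - 1))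
          = ((∑ T' ∈ W.powersetCard k, dpc G T' W) * W.card) * (W.card - 1) := by ring
        _ = (k * W.card.choose k * dpc G W W) * (W.card - 1) := by rw [e3]
        _ = k * (W.card - 1) * (W.card.choose k * dpc G W W) := by ring
    have hB : (∑ T' ∈ W.powersetCard k, dpc G T' T') * (W.card * (W.card - 1))
        = k * (k - 1) * (W.card.choose k * dpc G W W) := by rw [e2]; ring
    have hAB : (∑ T' ∈ W.powersetCard k, dpc G T' (W \ T')) * (W.card * (W.card - 1))
          + k * (k - 1) * (W.card.choose k * dpc G W W)
        = k * (W.card - 1) * (W.card.choose k * dpc G W W) := by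
      rw [← hA, ← hsum_eq, add_mul, hB]
    have hdist : k * (W.card - 1) * (W.card.choose k * dpc G W W)
        = k * (W.card - k) * (W.card.choose k * dpc G W W)
          + k * (k - 1) * (W.card.choose k * dpc G W W) := by
      rw [hsplit]; ring
    exact Nat.add_right_cancel (hAB.trans hdist)
  have key : (W.powersetCard k).card * (k * (W.card - k) * dpc G W W)
      ≤ (W.powersetCard k).card * (dpc G T (W \ T) * (W.card * (W.card - 1))) := by
    have hsum_le : (∑ T' ∈ W.powersetCard k, dpc G T' (W \ T'))
        ≤ (W.powersetCard k).card * dpc G T (W \ T) := by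
      simpa using Finset.sum_le_card_nsmul _ _ _ (fun T' hT' => hTmax T' hT')
    calc (W.powersetCard k).card * (k * (W.card - k) * dpc G W W)
        = k * (W.card - k) * ((W.powersetCard k).card * dpc G W W) := by ring
      _ = (∑ T' ∈ W.powersetCard k, dpc G T' (W \ T')) * (W.card * (W.card - 1)) := by
          rw [hS1, hC]
      _ ≤ ((W.powersetCard k).card * dpc G T (W \ T)) * (W.card * (W.card - 1)) :=
          Nat.mul_le_mul_right _ hsum_le
      _ = (W.powersetCard k).card * (dpc G T (W \ T) * (W.card * (W.card - 1))) := by ring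
  exact Nat.le_of_mul_le_mul_left key hCpos

lemma mIn_mono {X X' : Finset V} (h : X ⊆ X') : mIn G X ≤ mIn G X' := by
  have h1 := two_mul_mIn G X
  have h2 := two_mul_mIn G X'
  have h3 := dpc_mono G h h
  omega

lemma mIn_union {X Y : Finset V} (h : Disjoint X Y) :
    mIn G (X ∪ Y) = mIn G X + dpc G X Y + mIn G Y := by
  have h1 := two_mul_mIn G (X ∪ Y)
  rw [dpc_union_left G h, dpc_union_right G h, dpc_union_right G h] at h1
  have h2 := two_mul_mIn G X
  have h3 := two_mul_mIn G Y
  have h4 := dpc_comm G Y X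
  omega

variable (α : ℝ)

lemma cov_eq_deg (X : Finset V) :
    cov G α X = α * (∑ v ∈ X, (G.degree v : ℝ)) - (3 * α - 1) * (mIn G X : ℝ) := by
  have h1 : mBtw G X Xᶜ = dpc G X Xᶜ := mBtw_eq_dpc G disjoint_compl_right
  have h2 := dpc_compl_split G X
  have h3 := dpc_univ G X
  have h4 := two_mul_mIn G X
  have h5 : (dpc G X Xᶜ : ℝ) = (∑ v ∈ X, (G.degree v : ℝ)) - 2 * (mIn G X : ℝ) := by
    have : dpc G X Xᶜ + 2 * mIn G X = ∑ v ∈ X, G.degree v := by omega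
    have hc : ((dpc G X Xᶜ + 2 * mIn G X : ℕ) : ℝ) = ((∑ v ∈ X, G.degree v : ℕ) : ℝ) :=
      congrArg (fun n : ℕ => (n : ℝ)) this
    push_cast at hc
    linarith
  unfold cov
  rw [h1, h5]
  ring

lemma cov_nonneg (h0 : 0 ≤ α) (h1 : α ≤ 1) (X : Finset V) : 0 ≤ cov G α X := by
  unfold cov
  have := Nat.cast_nonneg (α := ℝ) (mIn G X)
  have := Nat.cast_nonneg (α := ℝ) (mBtw G X Xᶜ)
  nlinarith

lemma alpha_dpc_le_cov (h0 : 0 ≤ α) (h1 : α ≤ 1) {X Y : Finset V} (h : Disjoint X Y) :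
    α * (dpc G X Y : ℝ) ≤ cov G α X := by
  have hYc : Y ⊆ Xᶜ := fun y hy => Finset.mem_compl.2 (Finset.disjoint_right.1 h hy)
  have hle : dpc G X Y ≤ dpc G X Xᶜ := dpc_mono G (Finset.Subset.refl X) hYc
  have h2 : mBtw G X Xᶜ = dpc G X Xᶜ := mBtw_eq_dpc G disjoint_compl_right
  unfold cov
  rw [h2]
  have hcast : (dpc G X Y : ℝ) ≤ (dpc G X Xᶜ : ℝ) := by exact_mod_cast hle
  have := Nat.cast_nonneg (α := ℝ) (mIn G X)
  nlinarith

lemma cov_empty : cov G α ∅ = 0 := by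
  have h1 : mIn G (∅ : Finset V) = 0 := by
    have := two_mul_mIn G (∅ : Finset V)
    simp [dpc] at this
    omega
  have h2 : mBtw G (∅ : Finset V) (∅ : Finset V)ᶜ = 0 := by
    rw [mBtw_eq_dpc G (Finset.disjoint_left.2 (by simp))]
    simp [dpc]
  unfold cov
  rw [h1, h2]
  simp

end GraphAux

set_option maxHeartbeats 1600000 in
theorem stmt7 {V : Type*} [Fintype V] [DecidableEq V] (G : SimpleGraph V)
    [DecidableRel G.Adj] (α ε : ℝ) (hα0 : 1 / 3 ≤ α) (hα1 : α ≤ 1)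
    (hε0 : 0 < ε) (hε1 : ε < 1)
    (k : ℕ) (hk : k + ⌈(4 * (k : ℝ)) / ε ^ 2⌉₊ ≤ Fintype.card V)
    (V' : Finset V) (hV'card : V'.card = k + ⌈(4 * (k : ℝ)) / ε ^ 2⌉₊)
    (hV'top : ∀ u ∈ V', ∀ w ∉ V', G.degree w ≤ G.degree u) :
    ∃ S ⊆ V', S.card = k ∧
      ∀ O : Finset V, O.card = k → cov G α S ≥ (1 - ε) * cov G α O := by
  classical
  have hkV' : k ≤ V'.card := by rw [hV'card]; omega
  have hPne : (V'.powersetCard k).Nonempty := Finset.powersetCard_nonempty.2 hkV'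
  obtain ⟨S, hSmem, hSmax⟩ := Finset.exists_max_image (V'.powersetCard k) (cov G α) hPne
  obtain ⟨hSsub, hScard⟩ := Finset.mem_powersetCard.1 hSmem
  refine ⟨S, hSsub, hScard, ?_⟩
  intro O hOcard
  have hα0' : (0 : ℝ) < α := lt_of_lt_of_le (by norm_num) hα0
  have hαnn : (0 : ℝ) ≤ α := hα0'.le
  have hM0 : 0 ≤ cov G α S := cov_nonneg G α hαnn hα1 S
  set M := cov G α S with hMdef
  rcases Nat.eq_zero_or_pos k with hk0 | hkpos
  · have hO : O = ∅ := Finset.card_eq_zero.1 (by rw [hOcard, hk0])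
    rw [ge_iff_le, hO, cov_empty]
    simpa using hM0
  -- main case
  set t := ⌈(4 * (k : ℝ)) / ε ^ 2⌉₊ with ht
  set O₁ := O ∩ V' with hO₁
  set O₂ := O \ V' with hO₂
  set W := V' \ O with hWdef
  set r := O₂.card with hrdef
  have hcard12 : O₁.card + O₂.card = k := by
    rw [hO₁, hO₂, Finset.card_inter_add_card_sdiff, hOcard]
  have hrk : r ≤ k := by omega
  have hO₁sub : O₁ ⊆ V' := Finset.inter_subset_right
  have hO₁subO : O₁ ⊆ O := Finset.inter_subset_left
  have hWO₁ : W = V' \ O₁ := by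
    ext x
    simp only [hWdef, hO₁, Finset.mem_sdiff, Finset.mem_inter]
    tauto
  have hwcard : W.card = t + r := by
    rw [hWO₁, Finset.card_sdiff_of_subset hO₁sub, hV'card]
    omega
  have hdisjOW : Disjoint O W := Finset.disjoint_sdiff
  have hWsubV' : W ⊆ V' := Finset.sdiff_subset
  -- numeric facts
  have hεsq : (0 : ℝ) < ε ^ 2 := by positivity
  have hceil : (4 * (k : ℝ)) / ε ^ 2 ≤ (t : ℝ) := Nat.le_ceil _
  have htε : 4 * (k : ℝ) ≤ ε ^ 2 * (t : ℝ) := by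
    rw [div_le_iff₀ hεsq] at hceil
    linarith
  have hε2le1 : ε ^ 2 ≤ 1 := by nlinarith
  have ht4k : 4 * k ≤ t := by
    have htnn : (0 : ℝ) ≤ (t : ℝ) := Nat.cast_nonneg t
    have h1 : (4 * (k : ℝ)) ≤ (t : ℝ) := by nlinarith [mul_le_mul_of_nonneg_right hε2le1 htnn]
    exact_mod_cast h1
  have hwk : k ≤ W.card := by omega
  have hw4 : 4 ≤ W.card := by omega
  have hrW : r ≤ W.card := by omega
  have hwpos : (0 : ℝ) < (W.card : ℝ) := by
    have : 0 < W.card := by omega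
    exact_mod_cast this
  have htpos : (0 : ℝ) < (t : ℝ) := by
    have : 0 < t := by omega
    exact_mod_cast this
  have hw1pos : (0 : ℝ) < (W.card : ℝ) - 1 := by
    have : (4 : ℝ) ≤ (W.card : ℝ) := by exact_mod_cast hw4
    linarith
  have hwR : (W.card : ℝ) = (t : ℝ) + (r : ℝ) := by
    rw [hwcard]; push_cast; ring
  have hrkR : (r : ℝ) ≤ (k : ℝ) := by exact_mod_cast hrk
  have hkR : (0 : ℝ) ≤ (k : ℝ) := Nat.cast_nonneg k
  have h4kw : 4 * (k : ℝ) ≤ (W.card : ℝ) := by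
    have : 4 * k ≤ W.card := by omega
    exact_mod_cast this
  -- Step B1 : bound on E1 := dpc O₁ W
  obtain ⟨Z, hZmem, hZbound⟩ := exists_small_dpc G W O₁ hrW
  obtain ⟨hZsub, hZcard⟩ := Finset.mem_powersetCard.1 hZmem
  have hdisjO₁Z : Disjoint O₁ Z := hdisjOW.mono hO₁subO hZsub
  have hT₁mem : O₁ ∪ Z ∈ V'.powersetCard k := by
    rw [Finset.mem_powersetCard]
    constructor
    · exact Finset.union_subset hO₁sub (hZsub.trans hWsubV')
    · rw [Finset.card_union_of_disjoint hdisjO₁Z, hZcard]; omega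
  have hcovT₁ : cov G α (O₁ ∪ Z) ≤ M := hSmax _ hT₁mem
  have hdisjT₁ : Disjoint (O₁ ∪ Z) (W \ Z) := by
    rw [Finset.disjoint_union_left]
    exact ⟨hdisjOW.mono hO₁subO Finset.sdiff_subset, Finset.disjoint_sdiff⟩
  have hsplitZ : dpc G O₁ (W \ Z) + dpc G O₁ Z = dpc G O₁ W := by
    rw [← dpc_union_right G Finset.sdiff_disjoint, Finset.sdiff_union_of_subset hZsub]
  have hE1 : 4 * α * (dpc G O₁ W : ℝ) ≤ 5 * M := by
    have hmono : dpc G O₁ (W \ Z) ≤ dpc G (O₁ ∪ Z) (W \ Z) :=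
      dpc_mono G Finset.subset_union_left (Finset.Subset.refl _)
    have hαA : α * (dpc G O₁ (W \ Z) : ℝ) ≤ M := by
      refine le_trans ?_ (le_trans (alpha_dpc_le_cov G α hαnn hα1 hdisjT₁) hcovT₁)
      have hc : (dpc G O₁ (W \ Z) : ℝ) ≤ (dpc G (O₁ ∪ Z) (W \ Z) : ℝ) := by exact_mod_cast hmono
      exact mul_le_mul_of_nonneg_left hc hαnn
    have hZR : (dpc G O₁ Z : ℝ) * (W.card : ℝ) ≤ (r : ℝ) * (dpc G O₁ W : ℝ) := by
      exact_mod_cast hZbound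
    have hsplitR : (dpc G O₁ (W \ Z) : ℝ) + (dpc G O₁ Z : ℝ) = (dpc G O₁ W : ℝ) := by
      exact_mod_cast hsplitZ
    set A := (dpc G O₁ (W \ Z) : ℝ) with hA
    set E1 := (dpc G O₁ W : ℝ) with hE1d
    have hE1nn : (0 : ℝ) ≤ E1 := Nat.cast_nonneg _
    have hAnn : (0 : ℝ) ≤ A := Nat.cast_nonneg _
    -- t * E1 ≤ w * A
    have hkey : (t : ℝ) * E1 ≤ (W.card : ℝ) * A := by
      have h0 : (W.card : ℝ) * E1 = (W.card : ℝ) * A + (dpc G O₁ Z : ℝ) * (W.card : ℝ) := by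
        rw [← hsplitR]; ring
      rw [hwR] at h0 hZR ⊢
      linarith [h0, hZR]
    -- α * t * E1 ≤ w * M
    have h1 : α * ((t : ℝ) * E1) ≤ (W.card : ℝ) * M := by
      calc α * ((t : ℝ) * E1) ≤ α * ((W.card : ℝ) * A) := mul_le_mul_of_nonneg_left hkey hαnn
        _ = (W.card : ℝ) * (α * A) := by ring
        _ ≤ (W.card : ℝ) * M := mul_le_mul_of_nonneg_left hαA hwpos.le
    -- 4 w ≤ 5 t
    have h45 : 4 * (W.card : ℝ) ≤ 5 * (t : ℝ) := by
      have : (4 : ℝ) * (r : ℝ) ≤ (t : ℝ) := by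
        have h4r : 4 * r ≤ t := by omega
        exact_mod_cast h4r
      rw [hwR]; linarith
    have h2 : (4 * α * E1) * (t : ℝ) ≤ (5 * M) * (t : ℝ) := by
      have hp1 : (4 * (W.card : ℝ)) * M ≤ (5 * (t : ℝ)) * M := mul_le_mul_of_nonneg_right h45 hM0
      linarith [h1, hp1]
    exact le_of_mul_le_mul_right h2 htpos
  -- Step B2 : bound on mW := mIn W
  obtain ⟨T, hTmem2, hTbound⟩ := exists_big_cut G W hwk
  obtain ⟨hTsub, hTcard⟩ := Finset.mem_powersetCard.1 hTmem2
  have hmW : (k : ℝ) * (mIn G W : ℝ) ≤ 2 * M * ((W.card : ℝ) - 1) := by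
    have hTmemV : T ∈ V'.powersetCard k :=
      Finset.mem_powersetCard.2 ⟨hTsub.trans hWsubV', hTcard⟩
    have hcovT : cov G α T ≤ M := hSmax _ hTmemV
    have hαB : α * (dpc G T (W \ T) : ℝ) ≤ M :=
      le_trans (alpha_dpc_le_cov G α hαnn hα1 Finset.disjoint_sdiff) hcovT
    set B := (dpc G T (W \ T) : ℝ) with hB
    have hBnn : (0 : ℝ) ≤ B := Nat.cast_nonneg _
    have hB3 : B ≤ 3 * M := by
      have := mul_le_mul_of_nonneg_right hα0 hBnn
      linarith
    have hTR : (k : ℝ) * ((W.card : ℝ) - (k : ℝ)) * (dpc G W W : ℝ)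
        ≤ B * ((W.card : ℝ) * ((W.card : ℝ) - 1)) := by
      have := hTbound
      have hcast : ((k * (W.card - k) * dpc G W W : ℕ) : ℝ)
          ≤ ((dpc G T (W \ T) * (W.card * (W.card - 1)) : ℕ) : ℝ) := by exact_mod_cast this
      push_cast [Nat.cast_sub hwk, Nat.cast_sub (show 1 ≤ W.card by omega)] at hcast
      exact hcast
    have hdpcWW : (dpc G W W : ℝ) = 2 * (mIn G W : ℝ) := by
      have := two_mul_mIn G W
      exact_mod_cast this.symm
    rw [hdpcWW] at hTR
    have hmWnn : (0 : ℝ) ≤ (mIn G W : ℝ) := Nat.cast_nonneg _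
    -- 3w ≤ 4(w - k)
    have h34 : 3 * (W.card : ℝ) ≤ 4 * ((W.card : ℝ) - (k : ℝ)) := by linarith
    have hkmWnn : (0 : ℝ) ≤ (k : ℝ) * (mIn G W : ℝ) := by positivity
    have hfin : ((k : ℝ) * (mIn G W : ℝ)) * (W.card : ℝ)
        ≤ (2 * M * ((W.card : ℝ) - 1)) * (W.card : ℝ) := by
      have w1 := mul_le_mul_of_nonneg_right h34 hkmWnn
      have w2 := mul_le_mul_of_nonneg_right hB3 (le_of_lt (mul_pos hwpos hw1pos))
      linarith [w1, w2, hTR]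
    exact le_of_mul_le_mul_right hfin hwpos
  -- Step A : the good set Y
  obtain ⟨Y, hYmem, hYbound⟩ := exists_low_interference G W O₁ hrW
  obtain ⟨hYsub, hYcard⟩ := Finset.mem_powersetCard.1 hYmem
  have hdisjO₁Y : Disjoint O₁ Y := hdisjOW.mono hO₁subO hYsub
  have hSYmem : O₁ ∪ Y ∈ V'.powersetCard k := by
    rw [Finset.mem_powersetCard]
    constructor
    · exact Finset.union_subset hO₁sub (hYsub.trans hWsubV')
    · rw [Finset.card_union_of_disjoint hdisjO₁Y, hYcard]; omega
  have hcovSY : cov G α (O₁ ∪ Y) ≤ M := hSmax _ hSYmem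
  -- degree comparison
  have hdeg : ∑ v ∈ O₂, G.degree v ≤ ∑ v ∈ Y, G.degree v := by
    rcases Nat.eq_zero_or_pos r with hr0 | hrpos
    · have hO₂e : O₂ = ∅ := Finset.card_eq_zero.1 hr0
      simp [hO₂e]
    · have hYne : Y.Nonempty := Finset.card_pos.1 (by rw [hYcard]; exact hrpos)
      obtain ⟨y₀, hy₀Y, hy₀min⟩ := Finset.exists_min_image Y (fun v => G.degree v) hYne
      have hy₀V' : y₀ ∈ V' := hWsubV' (hYsub hy₀Y)
      have hdy : ∀ v ∈ O₂, G.degree v ≤ G.degree y₀ := by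
        intro v hv
        exact hV'top y₀ hy₀V' v (Finset.mem_sdiff.1 hv).2
      calc ∑ v ∈ O₂, G.degree v ≤ O₂.card * G.degree y₀ := by
            simpa using Finset.sum_le_card_nsmul O₂ _ _ hdy
        _ = Y.card * G.degree y₀ := by rw [hYcard]
        _ ≤ ∑ v ∈ Y, G.degree v := by
            simpa using Finset.card_nsmul_le_sum Y _ _ hy₀min
  -- assemble
  have hOunion : O₁ ∪ O₂ = O := by
    ext x
    simp only [hO₁, hO₂, Finset.mem_union, Finset.mem_inter, Finset.mem_sdiff]
    tauto
  have hdisjO₁O₂ : Disjoint O₁ O₂ := by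
    rw [Finset.disjoint_left]
    intro a ha hb
    exact (Finset.mem_sdiff.1 hb).2 (Finset.mem_inter.1 ha).2
  set q1 := (dpc G O₁ Y : ℝ) with hq1
  set q2 := (mIn G Y : ℝ) with hq2
  have hq1nn : 0 ≤ q1 := Nat.cast_nonneg _
  have hq2nn : 0 ≤ q2 := Nat.cast_nonneg _
  -- cast of hYbound
  have hYR : (2 * q1 + 2 * q2) * ((W.card : ℝ) * ((W.card : ℝ) - 1))
      ≤ 2 * (r : ℝ) * ((W.card : ℝ) - 1) * (dpc G O₁ W : ℝ)
        + (r : ℝ) * ((r - 1 : ℕ) : ℝ) * (2 * (mIn G W : ℝ)) := by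
    have hdpcYY : (dpc G Y Y : ℝ) = 2 * q2 := by
      have := two_mul_mIn G Y
      rw [hq2]
      exact_mod_cast this.symm
    have hdpcWW : (dpc G W W : ℝ) = 2 * (mIn G W : ℝ) := by
      have := two_mul_mIn G W
      exact_mod_cast this.symm
    have hcast := (Nat.cast_le (α := ℝ)).2 hYbound
    push_cast [Nat.cast_sub (show 1 ≤ W.card by omega)] at hcast
    rw [hdpcYY, hdpcWW] at hcast
    push_cast
    linarith [hcast]
  -- bound on q1 + q2
  have hqbound : 2 * (q1 + q2) ≤ (23 / 8) * ε ^ 2 * M := by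
    set E1 := (dpc G O₁ W : ℝ) with hE1d
    have hE1nn : (0 : ℝ) ≤ E1 := Nat.cast_nonneg _
    have hE1le : E1 ≤ 15 / 4 * M := by
      have := mul_le_mul_of_nonneg_right hα0 hE1nn
      linarith [hE1]
    have hr1k : ((r - 1 : ℕ) : ℝ) ≤ (k : ℝ) := by
      have : r - 1 ≤ k := by omega
      exact_mod_cast this
    have hr1nn : (0 : ℝ) ≤ ((r - 1 : ℕ) : ℝ) := Nat.cast_nonneg _
    have hmWnn : (0 : ℝ) ≤ (mIn G W : ℝ) := Nat.cast_nonneg _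
    -- RHS of hYR ≤ (23/2) k M (w-1)
    have hrhs : 2 * (r : ℝ) * ((W.card : ℝ) - 1) * E1
          + (r : ℝ) * ((r - 1 : ℕ) : ℝ) * (2 * (mIn G W : ℝ))
        ≤ (23 / 2) * (k : ℝ) * M * ((W.card : ℝ) - 1) := by
      have t1 : 2 * (r : ℝ) * ((W.card : ℝ) - 1) * E1
          ≤ (15 / 2) * (k : ℝ) * M * ((W.card : ℝ) - 1) := by
        have u1 : (r : ℝ) * ((W.card : ℝ) - 1) ≤ (k : ℝ) * ((W.card : ℝ) - 1) :=
          mul_le_mul_of_nonneg_right hrkR hw1pos.le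
        have u2 : ((r : ℝ) * ((W.card : ℝ) - 1)) * E1 ≤ ((k : ℝ) * ((W.card : ℝ) - 1)) * E1 :=
          mul_le_mul_of_nonneg_right u1 hE1nn
        have u3 : ((k : ℝ) * ((W.card : ℝ) - 1)) * E1
            ≤ ((k : ℝ) * ((W.card : ℝ) - 1)) * (15 / 4 * M) :=
          mul_le_mul_of_nonneg_left hE1le (mul_nonneg hkR hw1pos.le)
        linarith
      have t2 : (r : ℝ) * ((r - 1 : ℕ) : ℝ) * (2 * (mIn G W : ℝ))
          ≤ 4 * (k : ℝ) * M * ((W.card : ℝ) - 1) := by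
        have v1 : (r : ℝ) * ((r - 1 : ℕ) : ℝ) ≤ (k : ℝ) * (k : ℝ) :=
          mul_le_mul hrkR hr1k hr1nn hkR
        have v2 : ((r : ℝ) * ((r - 1 : ℕ) : ℝ)) * (2 * (mIn G W : ℝ))
            ≤ ((k : ℝ) * (k : ℝ)) * (2 * (mIn G W : ℝ)) :=
          mul_le_mul_of_nonneg_right v1 (by positivity)
        have v3 : (k : ℝ) * ((k : ℝ) * (mIn G W : ℝ)) ≤ (k : ℝ) * (2 * M * ((W.card : ℝ) - 1)) :=
          mul_le_mul_of_nonneg_left hmW hkR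
        linarith
      linarith
    -- divide by (w-1): (2q1+2q2) * w ≤ (23/2) k M
    have hdiv1 : (2 * q1 + 2 * q2) * (W.card : ℝ) ≤ (23 / 2) * (k : ℝ) * M := by
      have h := le_trans hYR hrhs
      have h2 : ((2 * q1 + 2 * q2) * (W.card : ℝ)) * ((W.card : ℝ) - 1)
          ≤ ((23 / 2) * (k : ℝ) * M) * ((W.card : ℝ) - 1) := by linarith [h]
      exact le_of_mul_le_mul_right h2 hw1pos
    -- t ≤ w and 4k ≤ ε² t
    have htw : (t : ℝ) ≤ (W.card : ℝ) := by
      rw [hwR]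
      linarith [Nat.cast_nonneg (α := ℝ) r]
    have hdiv2 : (2 * (q1 + q2)) * (t : ℝ) ≤ ((23 / 8) * ε ^ 2 * M) * (t : ℝ) := by
      have hl : (2 * q1 + 2 * q2) * (t : ℝ) ≤ (23 / 2) * (k : ℝ) * M := by
        have u1 : (2 * q1 + 2 * q2) * (t : ℝ) ≤ (2 * q1 + 2 * q2) * (W.card : ℝ) :=
          mul_le_mul_of_nonneg_left htw (by linarith)
        linarith [hdiv1]
      have u2 : (4 * (k : ℝ)) * M ≤ (ε ^ 2 * (t : ℝ)) * M :=
        mul_le_mul_of_nonneg_right htε hM0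
      linarith [hl, u2]
    exact le_of_mul_le_mul_right hdiv2 htpos
  -- cov comparison
  have hcovSY_eq : cov G α (O₁ ∪ Y) = α * ((∑ v ∈ O₁, (G.degree v : ℝ))
        + (∑ v ∈ Y, (G.degree v : ℝ)))
      - (3 * α - 1) * ((mIn G O₁ : ℝ) + q1 + q2) := by
    rw [cov_eq_deg, Finset.sum_union hdisjO₁Y, mIn_union G hdisjO₁Y]
    push_cast
    ring
  have hcovO_eq : cov G α O = α * ((∑ v ∈ O₁, (G.degree v : ℝ))
        + (∑ v ∈ O₂, (G.degree v : ℝ)))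
      - (3 * α - 1) * (mIn G O : ℝ) := by
    rw [cov_eq_deg]
    rw [show (∑ v ∈ O, (G.degree v : ℝ)) = (∑ v ∈ O₁, (G.degree v : ℝ))
      + (∑ v ∈ O₂, (G.degree v : ℝ)) by rw [← Finset.sum_union hdisjO₁O₂, hOunion]]
  have hmInO₁le : (mIn G O₁ : ℝ) ≤ (mIn G O : ℝ) := by
    exact_mod_cast mIn_mono G hO₁subO
  have hdegR : (∑ v ∈ O₂, (G.degree v : ℝ)) ≤ (∑ v ∈ Y, (G.degree v : ℝ)) := by
    have : ((∑ v ∈ O₂, G.degree v : ℕ) : ℝ) ≤ ((∑ v ∈ Y, G.degree v : ℕ) : ℝ) := by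
      exact_mod_cast hdeg
    push_cast at this
    exact this
  have hβ0 : (0 : ℝ) ≤ 3 * α - 1 := by linarith
  have hβ2 : 3 * α - 1 ≤ 2 := by linarith
  have hcovO_le : cov G α O ≤ M + (3 * α - 1) * (q1 + q2) := by
    have h1 : cov G α O ≤ cov G α (O₁ ∪ Y) + (3 * α - 1) * (q1 + q2) := by
      rw [hcovO_eq, hcovSY_eq]
      have e1 : α * (∑ v ∈ O₂, (G.degree v : ℝ)) ≤ α * (∑ v ∈ Y, (G.degree v : ℝ)) :=
        mul_le_mul_of_nonneg_left hdegR hαnn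
      have e2 : (3 * α - 1) * (mIn G O₁ : ℝ) ≤ (3 * α - 1) * (mIn G O : ℝ) :=
        mul_le_mul_of_nonneg_left hmInO₁le hβ0
      linarith
    linarith
  -- finish
  have hfinal : cov G α O ≤ M + (23 / 8) * ε ^ 2 * M := by
    have : (3 * α - 1) * (q1 + q2) ≤ 2 * (q1 + q2) := by nlinarith
    linarith [hqbound]
  rw [ge_iff_le]
  have hstep : (1 - ε) * cov G α O ≤ (1 - ε) * (M + (23 / 8) * ε ^ 2 * M) :=
    mul_le_mul_of_nonneg_left hfinal (by linarith)
  have hscalar : (0 : ℝ) ≤ ε + (23 / 8) * ε ^ 3 - (23 / 8) * ε ^ 2 := by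
    nlinarith [sq_nonneg (2 * ε - 1), hε0.le]
  have hMs : (0 : ℝ) ≤ M * (ε + (23 / 8) * ε ^ 3 - (23 / 8) * ε ^ 2) := mul_nonneg hM0 hscalar
  nlinarith [hstep, hMs]
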